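/- Let f, f̃, h : ℝ³ → ℝ be in L¹ with ‖f‖₁ ≤ c, ‖f̃‖₁ ≤ c, ‖f̃ - f‖₁ ≤ Cδ, ‖f̃ - f - h‖₁ ≤ Cδ², and ‖h‖₁ ≤ Cδ. Set kₙ = f^{⊗n}, k̃ₙ = f̃^{⊗n}, and k'ₙ = Σᵢ f^{⊗(i-1)} ⊗ h ⊗ f^{⊗(n-i)}. Then ‖k̃ₙ - kₙ - k'ₙ‖_{L¹((ℝ³)ⁿ)} ≤ n²·C'·c^{n-1}·δ² where C' = max{C, C²/(2c)}. -/

import Mathlib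

open MeasureTheory Finset

lemma erase_split {ι : Type*} [LinearOrder ι] [DecidableEq ι] (s : Finset ι) (i : ι) (F : ι → ℝ) :
    ∏ j ∈ s.erase i, F j = (∏ j ∈ s.filter (· < i), F j) * ∏ j ∈ s.filter (i < ·), F j := by
  classical
  have he : s.erase i = s.filter (· < i) ∪ s.filter (i < ·) := by
    ext j
    simp only [mem_erase, mem_union, mem_filter]
    constructor
    · rintro ⟨hne, hj⟩
      rcases lt_or_gt_of_ne hne with hlt | hgt
      · exact Or.inl ⟨hj, hlt⟩
      · exact Or.inr ⟨hj, hgt⟩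
    · rintro (⟨hj, hlt⟩ | ⟨hj, hgt⟩)
      · exact ⟨ne_of_lt hlt, hj⟩
      · exact ⟨ne_of_gt hgt, hj⟩
  have hdisj : Disjoint (s.filter (· < i)) (s.filter (i < ·)) := by
    rw [Finset.disjoint_left]
    intro j hj1 hj2
    exact lt_asymm (mem_filter.mp hj1).2 (mem_filter.mp hj2).2
  rw [he, Finset.prod_union hdisj]

lemma split3 {ι : Type*} [LinearOrder ι] (s : Finset ι) {i : ι} (hi : i ∈ s) (F : ι → ℝ) :
    ∏ j ∈ s, F j = (∏ j ∈ s.filter (· < i), F j) * F i * ∏ j ∈ s.filter (i < ·), F j := by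
  classical
  rw [← Finset.mul_prod_erase s F hi, erase_split]
  ring

lemma tele {ι : Type*} [LinearOrder ι] (s : Finset ι) (a b : ι → ℝ) :
    (∏ j ∈ s, b j) - ∏ j ∈ s, a j
      = ∑ i ∈ s, (∏ j ∈ s.filter (· < i), b j) * (b i - a i) * ∏ j ∈ s.filter (i < ·), a j := by
  classical
  induction s using Finset.induction_on_max with
  | empty => simp
  | insert m s hm ih =>
    have hms : m ∉ s := fun h => lt_irrefl m (hm m h)
    rw [Finset.sum_insert hms, Finset.prod_insert hms, Finset.prod_insert hms]
    have e1 : (insert m s).filter (· < m) = s := by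
      ext j
      simp only [mem_filter, mem_insert]
      constructor
      · rintro ⟨h1 | h1, h2⟩
        · exact absurd h2 (by simp [h1])
        · exact h1
      · exact fun hj => ⟨Or.inr hj, hm j hj⟩
    have e2 : (insert m s).filter (m < ·) = ∅ := by
      ext j
      simp only [mem_filter, mem_insert, notMem_empty, iff_false, not_and]
      rintro (h1 | h1)
      · exact fun h2 => lt_irrefl m (h1 ▸ h2)
      · exact fun h2 => lt_asymm (hm j h1) h2
    rw [e1, e2]
    have e3 : ∀ i ∈ s, (∏ j ∈ (insert m s).filter (· < i), b j) * (b i - a i) *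
        ∏ j ∈ (insert m s).filter (i < ·), a j
        = a m * ((∏ j ∈ s.filter (· < i), b j) * (b i - a i) * ∏ j ∈ s.filter (i < ·), a j) := by
      intro i hi
      have f1 : (insert m s).filter (· < i) = s.filter (· < i) := by
        rw [filter_insert, if_neg]
        exact fun hmi => lt_asymm hmi (hm i hi)
      have f2 : (insert m s).filter (i < ·) = insert m (s.filter (i < ·)) := by
        rw [filter_insert, if_pos (hm i hi)]
      rw [f1, f2, Finset.prod_insert (fun hmem => hms (mem_filter.mp hmem).1)]
      ring
    rw [Finset.sum_congr rfl e3, ← Finset.mul_sum, ← ih]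
    simp only [prod_empty]
    ring

lemma key_id (n : ℕ) (a b g : Fin n → ℝ) :
    (∏ j, b j) - (∏ j, a j) - ∑ i, g i * ∏ j ∈ Finset.univ.erase i, a j
      = ∑ i : Fin n,
          ((∏ j, (if j < i then b j else if j = i then b j - a j - g j else a j))
            + ∑ k ∈ univ.filter (· < i),
                ∏ j, (if j < k then b j else if j = k then b j - a j
                      else if j = i then g j else a j)) := by
  rw [tele univ a b, ← Finset.sum_sub_distrib]
  refine Finset.sum_congr rfl fun i _ => ?_
  set s : Finset (Fin n) := univ.filter (· < i) with hs
  have hT : (∏ j, (if j < i then b j else if j = i then b j - a j - g j else a j))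
      = (∏ j ∈ s, b j) * (b i - a i - g i) * ∏ j ∈ univ.filter (i < ·), a j := by
    rw [split3 univ (mem_univ i)]
    congr 1
    · congr 1
      · exact prod_congr rfl fun j hj => if_pos (mem_filter.mp hj).2
      · simp
    · refine prod_congr rfl fun j hj => ?_
      have h1 : i < j := (mem_filter.mp hj).2
      rw [if_neg (fun h2 => lt_asymm h1 h2), if_neg (ne_of_gt h1)]
  have hS : ∀ k ∈ s, (∏ j, (if j < k then b j else if j = k then b j - a j
        else if j = i then g j else a j))
      = ((∏ j ∈ s.filter (· < k), b j) * (b k - a k) * ∏ j ∈ s.filter (k < ·), a j)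
          * (g i * ∏ j ∈ univ.filter (i < ·), a j) := by
    intro k hk
    have hki : k < i := (mem_filter.mp hk).2
    rw [split3 univ (mem_univ i)]
    have hL : ∏ j ∈ s, (if j < k then b j else if j = k then b j - a j
          else if j = i then g j else a j)
        = (∏ j ∈ s.filter (· < k), b j) * (b k - a k) * ∏ j ∈ s.filter (k < ·), a j := by
      rw [split3 s hk]
      congr 1
      · congr 1
        · exact prod_congr rfl fun j hj => if_pos (mem_filter.mp hj).2
        · rw [if_neg (lt_irrefl k), if_pos rfl]
      · refine prod_congr rfl fun j hj => ?_
        have h1 : k < j := (mem_filter.mp hj).2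
        have h2 : j < i := (mem_filter.mp (mem_filter.mp hj).1).2
        rw [if_neg (fun h => lt_asymm h1 h), if_neg (ne_of_gt h1), if_neg (ne_of_lt h2)]
    have hM : (if (i:Fin n) < k then b i else if i = k then b i - a i
          else if i = i then g i else a i) = g i := by
      rw [if_neg (fun h => lt_asymm hki h), if_neg (ne_of_gt hki), if_pos rfl]
    have hR : ∏ j ∈ univ.filter (i < ·), (if j < k then b j else if j = k then b j - a j
          else if j = i then g j else a j) = ∏ j ∈ univ.filter (i < ·), a j := by
      refine prod_congr rfl fun j hj => ?_
      have h1 : i < j := (mem_filter.mp hj).2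
      have h2 : k < j := lt_trans hki h1
      rw [if_neg (fun h => lt_asymm h2 h), if_neg (ne_of_gt h2), if_neg (ne_of_gt h1)]
    rw [hL, hM, hR]
    ring
  rw [hT, Finset.sum_congr rfl hS, ← Finset.sum_mul, ← tele s a b]
  have he2 : ∏ j ∈ univ.erase i, a j
      = (∏ j ∈ s, a j) * ∏ j ∈ univ.filter (i < ·), a j := erase_split univ i a
  rw [he2]
  ring

noncomputable def tfun {α : Type*} {n : ℕ} (f ftil h : α → ℝ) (i j : Fin n) : α → ℝ :=
  fun y => if j < i then ftil y else if j = i then ftil y - f y - h y else f y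

noncomputable def sfun {α : Type*} {n : ℕ} (f ftil h : α → ℝ) (k i j : Fin n) : α → ℝ :=
  fun y => if j < k then ftil y else if j = k then ftil y - f y else if j = i then h y else f y

lemma abs_sum_int {α : Type*} [MeasureSpace α] {ι : Type*} (s : Finset ι) (F : ι → α → ℝ)
    (hF : ∀ i ∈ s, Integrable (F i)) :
    ∫ x, |∑ i ∈ s, F i x| ≤ ∑ i ∈ s, ∫ x, |F i x| := by
  calc ∫ x, |∑ i ∈ s, F i x| ≤ ∫ x, ∑ i ∈ s, |F i x| := by
        refine integral_mono (integrable_finset_sum s hF).abs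
          (integrable_finset_sum s fun i hi => (hF i hi).abs) ?_
        exact fun x => Finset.abs_sum_le_sum_abs _ _
    _ = ∑ i ∈ s, ∫ x, |F i x| := integral_finset_sum s fun i hi => (hF i hi).abs

lemma prod_int_bound {E : Type*} [MeasureSpace E] [SigmaFinite (volume : Measure E)] {n : ℕ}
    (g : Fin n → EuclideanSpace ℝ (Fin 3) → ℝ) (bd : Fin n → ℝ) (hg : ∀ j, Integrable (g j))
    (hb : ∀ j, ∫ x, |g j x| ≤ bd j) :
    ∫ x : Fin n → EuclideanSpace ℝ (Fin 3), |∏ j, g j (x j)| ≤ ∏ j, bd j := by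
  have heq : (fun x : Fin n → EuclideanSpace ℝ (Fin 3) => |∏ j, g j (x j)|) = fun x => ∏ j, |g j (x j)| := by
    funext x; exact Finset.abs_prod _ _
  rw [heq, integral_fintype_prod_volume_eq_prod (ι := Fin n) (fun j y => |g j y|)]
  exact Finset.prod_le_prod (fun j _ => integral_nonneg fun x => abs_nonneg _) (fun j _ => hb j)

lemma prod_if_one {n : ℕ} (i : Fin n) (A c : ℝ) :
    ∏ j : Fin n, (if j = i then A else c) = A * c ^ (n - 1) := by
  rw [← Finset.mul_prod_erase univ _ (mem_univ i), if_pos rfl]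
  congr 1
  rw [Finset.prod_congr rfl (fun j hj => if_neg (Finset.mem_erase.mp hj).1),
    Finset.prod_const, Finset.card_erase_of_mem (mem_univ i), Finset.card_univ, Fintype.card_fin]

lemma prod_if_two {n : ℕ} (k i : Fin n) (hki : k ≠ i) (A B c : ℝ) :
    ∏ j : Fin n, (if j = k then A else if j = i then B else c) = A * B * c ^ (n - 2) := by
  rw [← Finset.mul_prod_erase univ _ (mem_univ k), if_pos rfl]
  have hik : i ∈ univ.erase k := Finset.mem_erase.mpr ⟨Ne.symm hki, mem_univ i⟩
  rw [← Finset.mul_prod_erase _ _ hik, if_neg (Ne.symm hki), if_pos rfl]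
  have : ∏ j ∈ (univ.erase k).erase i, (if j = k then A else if j = i then B else c)
      = c ^ (n - 2) := by
    rw [Finset.prod_congr rfl (fun j hj => ?_), Finset.prod_const, Finset.card_erase_of_mem hik,
      Finset.card_erase_of_mem (mem_univ k), Finset.card_univ, Fintype.card_fin]
    · rfl
    · rw [if_neg (Finset.mem_erase.mp (Finset.mem_erase.mp hj).2).1,
        if_neg (Finset.mem_erase.mp hj).1]
  rw [this]; ring

theorem stmt_8 (f ftil h : EuclideanSpace ℝ (Fin 3) → ℝ) (c C δ : ℝ)
    (hc : 0 < c)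
    (hf : Integrable f) (hftil : Integrable ftil) (hh : Integrable h)
    (hfc : ∫ x, |f x| ≤ c) (hftilc : ∫ x, |ftil x| ≤ c)
    (hdiff : ∫ x, |ftil x - f x| ≤ C * δ)
    (hder : ∫ x, |ftil x - f x - h x| ≤ C * δ ^ 2)
    (hhc : ∫ x, |h x| ≤ C * δ)
    (n : ℕ) (hn : 1 ≤ n) :
    ∫ x : Fin n → EuclideanSpace ℝ (Fin 3),
        |(∏ i, ftil (x i)) - (∏ i, f (x i)) -
          ∑ i, h (x i) * ∏ j ∈ Finset.univ.erase i, f (x j)|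
      ≤ n ^ 2 * max C (C ^ 2 / (2 * c)) * c ^ (n - 1) * δ ^ 2 := by

  set C' := max C (C ^ 2 / (2 * c)) with hC'def
  have hδ2 : (0:ℝ) ≤ δ ^ 2 := sq_nonneg δ
  have hC' : C ≤ C' := le_max_left _ _
  have hC'2 : C ^ 2 / (2 * c) ≤ C' := le_max_right _ _
  -- basic bounds
  have hB1 : (0:ℝ) ≤ c ^ (n - 1) := pow_nonneg hc.le _
  -- integrability of factor functions
  have hint_t : ∀ i j : Fin n, Integrable (tfun f ftil h i j) := by
    intro i j
    by_cases h1 : j < i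
    · unfold tfun
      simp only [if_pos h1]; exact hftil
    · by_cases h2 : j = i
      · unfold tfun
        simp only [if_neg h1, if_pos h2]; exact (hftil.sub hf).sub hh
      · unfold tfun
        simp only [if_neg h1, if_neg h2]; exact hf
  have hint_s : ∀ k i j : Fin n, Integrable (sfun f ftil h k i j) := by
    intro k i j
    by_cases h1 : j < k
    · unfold sfun
      simp only [if_pos h1]; exact hftil
    · by_cases h2 : j = k
      · unfold sfun
        simp only [if_neg h1, if_pos h2]; exact hftil.sub hf
      · by_cases h3 : j = i
        · unfold sfun
          simp only [if_neg h1, if_neg h2, if_pos h3]; exact hh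
        · unfold sfun
          simp only [if_neg h1, if_neg h2, if_neg h3]; exact hf
  have habs_t : ∀ i j : Fin n, ∫ y, |tfun f ftil h i j y| ≤ (if j = i then C * δ ^ 2 else c) := by
    intro i j
    by_cases h2 : j = i
    · have h1 : ¬ j < i := by simp [h2]
      rw [if_pos h2]
      unfold tfun
      simp only [if_neg h1, if_pos h2]
      exact hder
    · rw [if_neg h2]
      by_cases h1 : j < i
      · unfold tfun
        simp only [if_pos h1]; exact hftilc
      · unfold tfun
        simp only [if_neg h1, if_neg h2]; exact hfc
  have habs_s : ∀ k i j : Fin n, k < i →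
      ∫ y, |sfun f ftil h k i j y| ≤ (if j = k then C * δ else if j = i then C * δ else c) := by
    intro k i j hki
    by_cases h2 : j = k
    · have h1 : ¬ j < k := by simp [h2]
      rw [if_pos h2]
      unfold sfun
      simp only [if_neg h1, if_pos h2]
      exact hdiff
    · rw [if_neg h2]
      by_cases h3 : j = i
      · have h1 : ¬ j < k := by subst h3; exact fun hlt => lt_asymm hlt hki
        rw [if_pos h3]
        unfold sfun
        simp only [if_neg h1, if_neg h2, if_pos h3]
        exact hhc
      · rw [if_neg h3]
        by_cases h1 : j < k
        · unfold sfun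
          simp only [if_pos h1]; exact hftilc
        · unfold sfun
          simp only [if_neg h1, if_neg h2, if_neg h3]; exact hfc
  -- bounds on the integral of each term
  have hT : ∀ i : Fin n, ∫ x : Fin n → EuclideanSpace ℝ (Fin 3), |∏ j, tfun f ftil h i j (x j)|
      ≤ C' * c ^ (n - 1) * δ ^ 2 := by
    intro i
    calc ∫ x : Fin n → EuclideanSpace ℝ (Fin 3), |∏ j, tfun f ftil h i j (x j)|
        ≤ ∏ j : Fin n, (if j = i then C * δ ^ 2 else c) :=
          prod_int_bound (E := EuclideanSpace ℝ (Fin 3)) _ _ (hint_t i) (habs_t i)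
      _ = (C * δ ^ 2) * c ^ (n - 1) := prod_if_one i _ c
      _ ≤ C' * c ^ (n - 1) * δ ^ 2 := by nlinarith [mul_le_mul_of_nonneg_right hC' (mul_nonneg hB1 hδ2)]
  have hS : ∀ i k : Fin n, k < i → ∫ x : Fin n → EuclideanSpace ℝ (Fin 3), |∏ j, sfun f ftil h k i j (x j)|
      ≤ 2 * (C' * c ^ (n - 1) * δ ^ 2) := by
    intro i k hki
    have hn2 : 2 ≤ n := by
      have h1 : (k:ℕ) < (i:ℕ) := hki
      have h2 : (i:ℕ) < n := i.isLt
      omega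
    calc ∫ x : Fin n → EuclideanSpace ℝ (Fin 3), |∏ j, sfun f ftil h k i j (x j)|
        ≤ ∏ j : Fin n, (if j = k then C * δ else if j = i then C * δ else c) :=
          prod_int_bound (E := EuclideanSpace ℝ (Fin 3)) _ _ (hint_s k i) (fun j => habs_s k i j hki)
      _ = (C * δ) * (C * δ) * c ^ (n - 2) := prod_if_two k i (ne_of_lt hki) _ _ c
      _ ≤ 2 * (C' * c ^ (n - 1) * δ ^ 2) := by
          have hpow : c ^ (n - 1) = c ^ (n - 2) * c := by
            rw [← pow_succ]
            congr 1
            omega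
          rw [hpow]
          have h2c : C ^ 2 ≤ C' * (2 * c) := by
            rw [← div_le_iff₀ (by linarith)]
            exact hC'2
          have h0 : 0 ≤ c ^ (n - 2) := pow_nonneg hc.le _
          nlinarith [mul_le_mul_of_nonneg_right h2c (mul_nonneg h0 hδ2)]
  -- rewrite the integrand using key_id
  have hident : (fun x : Fin n → EuclideanSpace ℝ (Fin 3) => |(∏ i, ftil (x i)) - (∏ i, f (x i)) -
        ∑ i, h (x i) * ∏ j ∈ Finset.univ.erase i, f (x j)|)
      = fun x : Fin n → EuclideanSpace ℝ (Fin 3) => |∑ i : Fin n, ((∏ j, tfun f ftil h i j (x j))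
          + ∑ k ∈ univ.filter (· < i), ∏ j, sfun f ftil h k i j (x j))| := by
    funext x
    congr 1
    exact key_id n (fun j => f (x j)) (fun j => ftil (x j)) (fun j => h (x j))
  rw [hident]
  -- triangle inequality
  have hTint : ∀ i : Fin n, Integrable (fun x : Fin n → EuclideanSpace ℝ (Fin 3) => ∏ j, tfun f ftil h i j (x j)) :=
    fun i => Integrable.fintype_prod (fun j => hint_t i j)
  have hSint : ∀ k i : Fin n, Integrable (fun x : Fin n → EuclideanSpace ℝ (Fin 3) => ∏ j, sfun f ftil h k i j (x j)) :=
    fun k i => Integrable.fintype_prod (fun j => hint_s k i j)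
  have step1 : ∫ x : Fin n → EuclideanSpace ℝ (Fin 3), |∑ i : Fin n, ((∏ j, tfun f ftil h i j (x j))
          + ∑ k ∈ univ.filter (· < i), ∏ j, sfun f ftil h k i j (x j))|
      ≤ ∑ i : Fin n, ∫ x : Fin n → EuclideanSpace ℝ (Fin 3), |(∏ j, tfun f ftil h i j (x j))
          + ∑ k ∈ univ.filter (· < i), ∏ j, sfun f ftil h k i j (x j)| := by
    refine abs_sum_int univ _ (fun i _ => ?_)
    exact (hTint i).add (integrable_finset_sum _ (fun k _ => hSint k i))
  have step2 : ∀ i : Fin n, ∫ x : Fin n → EuclideanSpace ℝ (Fin 3), |(∏ j, tfun f ftil h i j (x j))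
          + ∑ k ∈ univ.filter (· < i), ∏ j, sfun f ftil h k i j (x j)|
      ≤ (∫ x : Fin n → EuclideanSpace ℝ (Fin 3), |∏ j, tfun f ftil h i j (x j)|)
          + ∑ k ∈ univ.filter (· < i), ∫ x : Fin n → EuclideanSpace ℝ (Fin 3), |∏ j, sfun f ftil h k i j (x j)| := by
    intro i
    calc ∫ x : Fin n → EuclideanSpace ℝ (Fin 3), |(∏ j, tfun f ftil h i j (x j))
            + ∑ k ∈ univ.filter (· < i), ∏ j, sfun f ftil h k i j (x j)|
        ≤ ∫ x : Fin n → EuclideanSpace ℝ (Fin 3), (|∏ j, tfun f ftil h i j (x j)|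
            + ∑ k ∈ univ.filter (· < i), |∏ j, sfun f ftil h k i j (x j)|) := by
          refine integral_mono (((hTint i).add (integrable_finset_sum _
              (fun k _ => hSint k i))).abs) ((hTint i).abs.add (integrable_finset_sum _
              (fun k _ => (hSint k i).abs))) (fun x => ?_)
          exact (abs_add_le _ _).trans (add_le_add_right (Finset.abs_sum_le_sum_abs _ _) _)
      _ = _ := by
          rw [integral_add (hTint i).abs (integrable_finset_sum _ (fun k _ => (hSint k i).abs)),
            integral_finset_sum _ (fun k _ => (hSint k i).abs)]
  have hcard : ∀ i : Fin n, (univ.filter (· < i)).card = (i : ℕ) := by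
    intro i
    rw [show univ.filter (· < i) = Finset.Iio i by ext j; simp, Fin.card_Iio]
  calc ∫ x : Fin n → EuclideanSpace ℝ (Fin 3), |∑ i : Fin n, ((∏ j, tfun f ftil h i j (x j))
          + ∑ k ∈ univ.filter (· < i), ∏ j, sfun f ftil h k i j (x j))|
      ≤ ∑ i : Fin n, ((∫ x : Fin n → EuclideanSpace ℝ (Fin 3), |∏ j, tfun f ftil h i j (x j)|)
          + ∑ k ∈ univ.filter (· < i), ∫ x : Fin n → EuclideanSpace ℝ (Fin 3), |∏ j, sfun f ftil h k i j (x j)|) :=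
        step1.trans (Finset.sum_le_sum fun i _ => step2 i)
    _ ≤ ∑ i : Fin n, (C' * c ^ (n - 1) * δ ^ 2
          + (i : ℕ) * (2 * (C' * c ^ (n - 1) * δ ^ 2))) := by
        refine Finset.sum_le_sum fun i _ => add_le_add (hT i) ?_
        calc ∑ k ∈ univ.filter (· < i), ∫ x : Fin n → EuclideanSpace ℝ (Fin 3), |∏ j, sfun f ftil h k i j (x j)|
            ≤ ∑ k ∈ univ.filter (· < i), 2 * (C' * c ^ (n - 1) * δ ^ 2) :=
              Finset.sum_le_sum fun k hk => hS i k (mem_filter.mp hk).2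
          _ = (i : ℕ) * (2 * (C' * c ^ (n - 1) * δ ^ 2)) := by
              rw [Finset.sum_const, hcard i, nsmul_eq_mul]
    _ = (↑n) ^ 2 * C' * c ^ (n - 1) * δ ^ 2 := by
        have hsum : ∑ i : Fin n, ((1:ℝ) + 2 * (i : ℕ)) = (n : ℝ) ^ 2 := by
          have hnat' : ∀ m : ℕ, ∑ i ∈ Finset.range m, (1 + 2 * i) = m ^ 2 := by
            intro m
            induction m with
            | zero => simp
            | succ m ih => rw [Finset.sum_range_succ, ih]; ring
          have hnat := hnat' n
          rw [Fin.sum_univ_eq_sum_range (fun i => (1:ℝ) + 2 * i)]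
          calc ∑ i ∈ Finset.range n, ((1:ℝ) + 2 * i)
              = ((∑ i ∈ Finset.range n, (1 + 2 * i) : ℕ) : ℝ) := by push_cast; rfl
            _ = ((n ^ 2 : ℕ) : ℝ) := by rw [hnat]
            _ = (n : ℝ) ^ 2 := by push_cast; rfl
        calc ∑ i : Fin n, (C' * c ^ (n - 1) * δ ^ 2
              + (i : ℕ) * (2 * (C' * c ^ (n - 1) * δ ^ 2)))
            = ∑ i : Fin n, ((1:ℝ) + 2 * (i : ℕ)) * (C' * c ^ (n - 1) * δ ^ 2) := by
              refine Finset.sum_congr rfl fun i _ => ?_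
              ring
          _ = (n : ℝ) ^ 2 * (C' * c ^ (n - 1) * δ ^ 2) := by rw [← Finset.sum_mul, hsum]
          _ = (↑n) ^ 2 * C' * c ^ (n - 1) * δ ^ 2 := by ring
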